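/- Let (U(t))_{t∈ℕ} be a sequence of nonnegative reals and suppose there exist constants B > 0 and ε > 0 such that U(t+1)² − U(t)² ≤ B − ε·U(t) for all t. Then limsup_{τ→∞} (1/τ)·Σ_{t=1}^{τ} U(t) ≤ B/ε < ∞. -/

import Mathlib

/-- Scalar deterministic Lyapunov stability theorem: a drift condition
`U(t+1)² - U(t)² ≤ B - ε U(t)` implies the time-average backlog is at most
`B / ε`. -/
theorem stmt_6 (U : ℕ → ℝ) (hU : ∀ t, 0 ≤ U t) (B ε : ℝ) (hB : 0 < B)
    (hε : 0 < ε)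
    (hdrift : ∀ t, U (t + 1) ^ 2 - U t ^ 2 ≤ B - ε * U t) :
    Filter.limsup (fun τ : ℕ => (1 / (τ : ℝ)) * ∑ t ∈ Finset.Icc 1 τ, U t)
        Filter.atTop ≤ B / ε := by
  -- Telescoping bound: ε * ∑_{t ∈ range n} U t ≤ n*B + U 0 ^ 2
  have key : ∀ n : ℕ, ε * ∑ t ∈ Finset.range n, U t ≤ n * B + U 0 ^ 2 := by
    intro n
    have hsum : ∑ t ∈ Finset.range n, (U (t + 1) ^ 2 - U t ^ 2)
        ≤ ∑ t ∈ Finset.range n, (B - ε * U t) :=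
      Finset.sum_le_sum fun t _ => hdrift t
    rw [Finset.sum_range_sub (fun t => U t ^ 2)] at hsum
    simp only [Finset.sum_sub_distrib, Finset.sum_const, Finset.card_range,
      nsmul_eq_mul, ← Finset.mul_sum] at hsum
    nlinarith [sq_nonneg (U n)]
  set f : ℕ → ℝ := fun τ : ℕ => (1 / (τ : ℝ)) * ∑ t ∈ Finset.Icc 1 τ, U t with hf
  set g : ℕ → ℝ := fun τ : ℕ => B / ε + (B + U 0 ^ 2) / ε * (1 / (τ : ℝ)) with hg
  have hfg : ∀ τ : ℕ, 1 ≤ τ → f τ ≤ g τ := by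
    intro τ hτ
    have hτpos : (0 : ℝ) < τ := by exact_mod_cast hτ
    have h1 : ∑ t ∈ Finset.Icc 1 τ, U t ≤ ∑ t ∈ Finset.range (τ + 1), U t := by
      have : Finset.Icc 1 τ ⊆ Finset.range (τ + 1) := by
        intro x hx
        simp only [Finset.mem_Icc] at hx
        simp [Nat.lt_succ_iff, hx.2]
      exact Finset.sum_le_sum_of_subset_of_nonneg this (fun i _ _ => hU i)
    have h2 := key (τ + 1)
    have h3 : ε * ∑ t ∈ Finset.Icc 1 τ, U t ≤ (τ + 1) * B + U 0 ^ 2 := by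
      calc ε * ∑ t ∈ Finset.Icc 1 τ, U t ≤ ε * ∑ t ∈ Finset.range (τ + 1), U t :=
            mul_le_mul_of_nonneg_left h1 hε.le
        _ ≤ ((τ + 1 : ℕ) : ℝ) * B + U 0 ^ 2 := h2
        _ = (τ + 1) * B + U 0 ^ 2 := by push_cast; ring
    have : f τ = (∑ t ∈ Finset.Icc 1 τ, U t) / τ := by
      simp [hf, div_eq_mul_inv, mul_comm]
    rw [this, hg]
    rw [div_le_iff₀ hτpos]
    have hεinv : (0 : ℝ) < ε := hε
    field_simp
    nlinarith [mul_le_mul_of_nonneg_left h3 (le_of_lt (mul_pos hε hτpos)),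
      Finset.sum_nonneg (fun i (_ : i ∈ Finset.Icc 1 τ) => hU i)]
  have hgtend : Filter.Tendsto g Filter.atTop (nhds (B / ε)) := by
    have h1 : Filter.Tendsto (fun τ : ℕ => (1 / (τ : ℝ))) Filter.atTop (nhds 0) :=
      tendsto_one_div_atTop_nhds_zero_nat
    have := h1.const_mul ((B + U 0 ^ 2) / ε)
    have h2 := this.const_add (B / ε)
    simpa [hg, one_div] using h2
  have hglimsup : Filter.limsup g Filter.atTop = B / ε := hgtend.limsup_eq
  rw [← hglimsup]
  apply Filter.limsup_le_limsup
  · filter_upwards [Filter.eventually_ge_atTop 1] with τ hτ using hfg τ hτ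
  · apply Filter.isCoboundedUnder_le_of_eventually_le Filter.atTop (x := 0)
    filter_upwards with n
    exact mul_nonneg (by positivity) (Finset.sum_nonneg fun i _ => hU i)
  · exact hgtend.isBoundedUnder_le
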